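/- Let R be a σ-finite nonnegative measure on Ω and P a probability measure on Ω with P ≪ R, such that H(P|R) is well-defined (i.e. ∫ W dP < ∞ for some measurable W ≥ 0 with ∫ e^{−W} dR < ∞). Then H(P|R) = sup{ ∫ u dP − log ∫ e^u dR : u measurable, ∫ e^u dR < ∞ and ∫ u_− dP < ∞ }, where u_− = max(−u,0) and ∫ u dP ∈ (−∞,∞] is well-defined whenever ∫ u_− dP < ∞. -/

import Mathlib

open MeasureTheory Real Filter
open scoped Classical ENNReal Topology

/-- Relative entropy `H(P|S) = ∫ log(dP/dS) dP ∈ (-∞,∞]` between (probability) measures,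
`+∞` if `P` is not absolutely continuous w.r.t. `S` or `log(dP/dS)` is not `P`-integrable. -/
noncomputable def relEnt {Ω : Type*} [MeasurableSpace Ω] (P S : Measure Ω) : EReal :=
  if P ≪ S ∧ Integrable (llr P S) P then ((∫ ω, llr P S ω ∂P : ℝ) : EReal) else ⊤

/-- The normalizing constant `z_W = ∫ e^{-W} dR`. -/
noncomputable def zW {Ω : Type*} [MeasurableSpace Ω] (R : Measure Ω) (W : Ω → ℝ) : ENNReal :=
  ∫⁻ ω, ENNReal.ofReal (Real.exp (-W ω)) ∂ R

/-- The tilted probability measure `R_W = z_W⁻¹ e^{-W}·R`. -/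
noncomputable def tiltedPM {Ω : Type*} [MeasurableSpace Ω] (R : Measure Ω) (W : Ω → ℝ) :
    Measure Ω :=
  (zW R W)⁻¹ • R.withDensity (fun ω => ENNReal.ofReal (Real.exp (-W ω)))

/-- Relative entropy with respect to a possibly unbounded (σ-finite) reference measure `R`,
defined through the tilting function `W` by `H(P|R) := H(P|R_W) - ∫ W dP - log z_W`. -/
noncomputable def relEntSF {Ω : Type*} [MeasurableSpace Ω] (R : Measure Ω) (W : Ω → ℝ)
    (P : Measure Ω) : EReal :=
  relEnt P (tiltedPM R W) - ((∫ ω, W ω ∂P : ℝ) : EReal)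
    - ((Real.log (zW R W).toReal : ℝ) : EReal)

lemma fenchel_young {a b : ℝ} (ha : 0 ≤ a) :
    a * b ≤ a * Real.log a - a + Real.exp b := by
  rcases ha.eq_or_lt with h | h
  · simp [← h, (Real.exp_pos b).le]
  · have h1 : Real.log (Real.exp b / a) ≤ Real.exp b / a - 1 :=
      Real.log_le_sub_one_of_pos (div_pos (Real.exp_pos b) h)
    rw [Real.log_div (Real.exp_pos b).ne' h.ne', Real.log_exp] at h1
    have h2 := mul_le_mul_of_nonneg_left h1 ha
    rw [mul_sub, mul_sub, mul_div_cancel₀ _ h.ne'] at h2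
    nlinarith

lemma ofReal_abs_eq (x : ℝ) :
    ENNReal.ofReal |x| = ENNReal.ofReal x + ENNReal.ofReal (-x) := by
  rcases le_or_gt 0 x with h | h
  · rw [abs_of_nonneg h, ENNReal.ofReal_eq_zero.mpr (by linarith : -x ≤ 0)]; simp
  · rw [abs_of_neg h, ENNReal.ofReal_eq_zero.mpr h.le]; simp

lemma integrable_of_lintegral_parts {Ω : Type*} [MeasurableSpace Ω] {P : Measure Ω}
    {u : Ω → ℝ} (hu : Measurable u) (hpos : ∫⁻ ω, ENNReal.ofReal (u ω) ∂P ≠ ⊤)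
    (hneg : ∫⁻ ω, ENNReal.ofReal (-u ω) ∂P ≠ ⊤) : Integrable u P := by
  refine ⟨hu.aestronglyMeasurable, ?_⟩
  rw [hasFiniteIntegral_iff_norm]
  simp_rw [Real.norm_eq_abs, ofReal_abs_eq]
  rw [lintegral_add_left (hu.ennreal_ofReal)]
  exact ENNReal.add_lt_top.mpr ⟨hpos.lt_top, hneg.lt_top⟩

lemma lintegral_ofReal_neg_llr_ne_top {Ω : Type*} [MeasurableSpace Ω]
    (P S : Measure Ω) [IsProbabilityMeasure P] [IsProbabilityMeasure S] (hPS : P ≪ S) :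
    ∫⁻ ω, ENNReal.ofReal (-(llr P S ω)) ∂P ≠ ⊤ := by
  have hm : AEMeasurable (fun ω => ENNReal.ofReal (-(llr P S ω))) S :=
    ((measurable_llr P S).neg.ennreal_ofReal).aemeasurable
  rw [← lintegral_rnDeriv_mul hPS hm]
  have hbound : ∀ᵐ ω ∂S, P.rnDeriv S ω * ENNReal.ofReal (-(llr P S ω)) ≤ 1 := by
    filter_upwards [Measure.rnDeriv_lt_top P S] with ω hω
    set r := P.rnDeriv S ω with hr
    set x := r.toReal with hx
    have hx0 : 0 ≤ x := ENNReal.toReal_nonneg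
    have hrx : r = ENNReal.ofReal x := (ENNReal.ofReal_toReal hω.ne).symm
    rcases le_or_gt 1 x with hx1 | hx1
    · have : -(llr P S ω) ≤ 0 := by
        simp only [llr, neg_nonpos]
        exact Real.log_nonneg hx1
      simp [ENNReal.ofReal_eq_zero.mpr this]
    · rcases hx0.eq_or_lt with h0 | h0
      · rw [hrx, ← h0]; simp
      · have hlog : x * (-(Real.log x)) ≤ 1 - x := by
          have := Real.log_le_sub_one_of_pos (inv_pos.mpr h0)
          rw [Real.log_inv] at this
          have := mul_le_mul_of_nonneg_left this hx0
          rw [mul_sub, mul_inv_cancel₀ h0.ne'] at this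
          linarith
        rw [hrx, ← ENNReal.ofReal_mul hx0]
        calc ENNReal.ofReal (x * -(llr P S ω)) ≤ ENNReal.ofReal 1 := by
              apply ENNReal.ofReal_le_ofReal
              simp only [llr]
              rw [← hx]
              linarith
          _ = 1 := ENNReal.ofReal_one
  have : ∫⁻ ω, P.rnDeriv S ω * ENNReal.ofReal (-(llr P S ω)) ∂S ≤ 1 := by
    calc ∫⁻ ω, P.rnDeriv S ω * ENNReal.ofReal (-(llr P S ω)) ∂S ≤ ∫⁻ _, 1 ∂S :=
          lintegral_mono_ae hbound
      _ = 1 := by simp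
  exact (this.trans_lt ENNReal.one_lt_top).ne

lemma ofReal_max_zero' (x : ℝ) : ENNReal.ofReal (max x 0) = ENNReal.ofReal x := by
  rcases le_or_gt 0 x with h | h
  · rw [max_eq_left h]
  · rw [max_eq_right h.le, ENNReal.ofReal_eq_zero.mpr h.le, ENNReal.ofReal_zero]

lemma lintegral_ofReal_pos_ne_top {Ω : Type*} [MeasurableSpace Ω]
    {P S : Measure Ω} [IsProbabilityMeasure P] [IsProbabilityMeasure S] (hPS : P ≪ S)
    {u : Ω → ℝ} (hu : Measurable u)
    (hexp : ∫⁻ ω, ENNReal.ofReal (Real.exp (u ω)) ∂S ≠ ⊤)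
    (hllr : ∫⁻ ω, ENNReal.ofReal (llr P S ω) ∂P ≠ ⊤) :
    ∫⁻ ω, ENNReal.ofReal (u ω) ∂P ≠ ⊤ := by
  rw [← lintegral_rnDeriv_mul hPS hu.ennreal_ofReal.aemeasurable]
  have hptw : ∀ᵐ ω ∂S, P.rnDeriv S ω * ENNReal.ofReal (u ω) ≤
      P.rnDeriv S ω * ENNReal.ofReal (llr P S ω) + ENNReal.ofReal (Real.exp (u ω)) := by
    filter_upwards [Measure.rnDeriv_lt_top P S] with ω hω
    set r := P.rnDeriv S ω with hr
    set a := r.toReal with ha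
    have ha0 : 0 ≤ a := ENNReal.toReal_nonneg
    have hra : r = ENNReal.ofReal a := (ENNReal.ofReal_toReal hω.ne).symm
    rcases le_or_gt (u ω) 0 with h | h
    · simp [ENNReal.ofReal_eq_zero.mpr h]
    · have key : a * u ω ≤ a * max (Real.log a) 0 + Real.exp (u ω) := by
        have h1 := fenchel_young (b := u ω) ha0
        have h2 : a * Real.log a ≤ a * max (Real.log a) 0 :=
          mul_le_mul_of_nonneg_left (le_max_left _ _) ha0
        linarith
      have hllrω : llr P S ω = Real.log a := rfl
      calc r * ENNReal.ofReal (u ω) = ENNReal.ofReal (a * u ω) := by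
            rw [hra, ← ENNReal.ofReal_mul ha0]
        _ ≤ ENNReal.ofReal (a * max (Real.log a) 0 + Real.exp (u ω)) :=
            ENNReal.ofReal_le_ofReal key
        _ = ENNReal.ofReal (a * max (Real.log a) 0) + ENNReal.ofReal (Real.exp (u ω)) :=
            ENNReal.ofReal_add (mul_nonneg ha0 (le_max_right _ _)) (Real.exp_pos _).le
        _ = r * ENNReal.ofReal (llr P S ω) + ENNReal.ofReal (Real.exp (u ω)) := by
            rw [ENNReal.ofReal_mul ha0, ofReal_max_zero', ← hra, hllrω]
  have hint : ∫⁻ ω, (P.rnDeriv S ω * ENNReal.ofReal (llr P S ω) + ENNReal.ofReal (Real.exp (u ω))) ∂S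
      ≠ ⊤ := by
    rw [lintegral_add_right _ hu.exp.ennreal_ofReal,
      lintegral_rnDeriv_mul hPS (measurable_llr P S).ennreal_ofReal.aemeasurable]
    exact ENNReal.add_ne_top.mpr ⟨hllr, hexp⟩
  exact ((lintegral_mono_ae hptw).trans_lt hint.lt_top).ne

lemma dv_real_ineq {Ω : Type*} [MeasurableSpace Ω]
    {P S : Measure Ω} [IsProbabilityMeasure P] [IsProbabilityMeasure S] (hPS : P ≪ S)
    (hint : Integrable (llr P S) P) {u : Ω → ℝ} (huP : Integrable u P)
    (hexpInt : Integrable (fun ω => Real.exp (u ω)) S) :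
    ∫ ω, u ω ∂P - Real.log (∫ ω, Real.exp (u ω) ∂S) ≤ ∫ ω, llr P S ω ∂P := by
  set E := ∫ ω, Real.exp (u ω) ∂S with hE
  have hE0 : 0 < E := integral_exp_pos hexpInt
  set c := Real.log E with hc
  set a : Ω → ℝ := fun ω => (P.rnDeriv S ω).toReal with haa
  -- integrability facts
  have ht1 : Integrable (fun ω => Real.exp (u ω - c)) S := by
    simpa [Real.exp_sub, div_eq_mul_inv] using hexpInt.mul_const (Real.exp c)⁻¹
  have ht2 : Integrable (fun ω => a ω * (u ω - c)) S := by
    have := (integrable_rnDeriv_smul_iff hPS (f := fun ω => u ω - c)).mpr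
      (huP.sub (integrable_const c))
    simpa [smul_eq_mul] using this
  have ht3 : Integrable (fun ω => a ω * llr P S ω) S := by
    have := (integrable_rnDeriv_smul_iff hPS).mpr hint
    simpa [smul_eq_mul] using this
  have ht4 : Integrable a S := Measure.integrable_toReal_rnDeriv
  -- nonnegativity of g
  have hg : ∀ ω, 0 ≤ Real.exp (u ω - c) - a ω * (u ω - c) + a ω * llr P S ω - a ω := by
    intro ω
    have h1 := fenchel_young (a := a ω) (b := u ω - c) ENNReal.toReal_nonneg
    have h2 : llr P S ω = Real.log (a ω) := rfl
    rw [← h2] at h1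
    linarith
  have hgint : Integrable
      (fun ω => Real.exp (u ω - c) - a ω * (u ω - c) + a ω * llr P S ω - a ω) S :=
    ((ht1.sub ht2).add ht3).sub ht4
  have h0 : 0 ≤ ∫ ω, (Real.exp (u ω - c) - a ω * (u ω - c) + a ω * llr P S ω - a ω) ∂S :=
    integral_nonneg hg
  have hsplit : ∫ ω, (Real.exp (u ω - c) - a ω * (u ω - c) + a ω * llr P S ω - a ω) ∂S
      = ∫ ω, Real.exp (u ω - c) ∂S - ∫ ω, a ω * (u ω - c) ∂S + ∫ ω, a ω * llr P S ω ∂S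
        - ∫ ω, a ω ∂S := by
    rw [integral_sub (by exact (ht1.sub ht2).add ht3) ht4,
      integral_add (by exact ht1.sub ht2) ht3, integral_sub ht1 ht2]
  rw [hsplit] at h0
  have e1 : ∫ ω, Real.exp (u ω - c) ∂S = 1 := by
    simp_rw [Real.exp_sub]
    rw [integral_div, Real.exp_log hE0, ← hE, div_self hE0.ne']
  have e2 : ∫ ω, a ω * (u ω - c) ∂S = ∫ ω, u ω ∂P - c := by
    have := integral_rnDeriv_smul hPS (f := fun ω => u ω - c)
    simp only [smul_eq_mul] at this
    rw [haa]
    rw [this, integral_sub huP (integrable_const c), integral_const]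
    simp
  have e3 : ∫ ω, a ω * llr P S ω ∂S = ∫ ω, llr P S ω ∂P := by
    have := integral_rnDeriv_smul hPS (f := llr P S)
    simpa [smul_eq_mul] using this
  have e4 : ∫ ω, a ω ∂S = 1 := by
    rw [haa, Measure.integral_toReal_rnDeriv hPS]
    simp
  rw [e1, e2, e3, e4] at h0
  linarith

lemma ereal_coe_ennreal_eq {x : ℝ≥0∞} (hx : x ≠ ⊤) : (x : EReal) = ((x.toReal : ℝ) : EReal) := by
  conv_lhs => rw [← ENNReal.ofReal_toReal hx]
  rw [EReal.coe_ennreal_ofReal, max_eq_left ENNReal.toReal_nonneg]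

lemma lintegral_ofReal_le_of_integrable {Ω : Type*} [MeasurableSpace Ω] {P : Measure Ω}
    {f : Ω → ℝ} (hf : Integrable f P) : ∫⁻ ω, ENNReal.ofReal (f ω) ∂P ≠ ⊤ := by
  have h := hf.2
  rw [hasFiniteIntegral_iff_norm] at h
  refine (lt_of_le_of_lt (lintegral_mono fun ω => ?_) h).ne
  exact ENNReal.ofReal_le_ofReal (le_abs_self _)

lemma lintegral_ofReal_exp_pos {Ω : Type*} [MeasurableSpace Ω] (S : Measure Ω)
    (hS : S ≠ 0) {u : Ω → ℝ} (hu : Measurable u) :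
    0 < ∫⁻ ω, ENNReal.ofReal (Real.exp (u ω)) ∂S := by
  rw [lintegral_pos_iff_support hu.exp.ennreal_ofReal]
  have : (Function.support fun ω => ENNReal.ofReal (Real.exp (u ω))) = Set.univ := by
    ext ω; simp [Function.mem_support, ENNReal.ofReal_eq_zero, not_le, Real.exp_pos]
  rw [this]
  exact Measure.measure_univ_pos.mpr hS

lemma ereal_top_sub {b : EReal} (hb : b ≠ ⊤) : (⊤ : EReal) - b = ⊤ := by
  rw [sub_eq_add_neg, EReal.top_add_of_ne_bot (fun h => hb (EReal.neg_eq_bot_iff.mp h))]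

lemma ereal_top_sub_sub {b c : EReal} (hb : b ≠ ⊤) (hc : c ≠ ⊤) :
    (⊤ : EReal) - b - c = ⊤ := by
  rw [sub_eq_add_neg, sub_eq_add_neg,
    EReal.top_add_of_ne_bot (fun h => hb (EReal.neg_eq_bot_iff.mp h)),
    EReal.top_add_of_ne_bot (fun h => hc (EReal.neg_eq_bot_iff.mp h))]

def dvSet {Ω : Type*} [MeasurableSpace Ω] (P S : Measure Ω) : Set EReal :=
  { x : EReal | ∃ u : Ω → ℝ, Measurable u ∧
      (∫⁻ ω, ENNReal.ofReal (Real.exp (u ω)) ∂S) ≠ ⊤ ∧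
      (∫⁻ ω, ENNReal.ofReal (-u ω) ∂P) ≠ ⊤ ∧
      x = ((∫⁻ ω, ENNReal.ofReal (u ω) ∂P : ℝ≥0∞) : EReal)
            - ((∫⁻ ω, ENNReal.ofReal (-u ω) ∂P : ℝ≥0∞) : EReal)
            - ENNReal.log (∫⁻ ω, ENNReal.ofReal (Real.exp (u ω)) ∂S) }

lemma dv_element_le_relEnt {Ω : Type*} [MeasurableSpace Ω]
    {P S : Measure Ω} [IsProbabilityMeasure P] [IsProbabilityMeasure S]
    {u : Ω → ℝ} (hu : Measurable u)
    (hexp : ∫⁻ ω, ENNReal.ofReal (Real.exp (u ω)) ∂S ≠ ⊤)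
    (hneg : ∫⁻ ω, ENNReal.ofReal (-u ω) ∂P ≠ ⊤) :
    ((∫⁻ ω, ENNReal.ofReal (u ω) ∂P : ℝ≥0∞) : EReal)
      - ((∫⁻ ω, ENNReal.ofReal (-u ω) ∂P : ℝ≥0∞) : EReal)
      - ENNReal.log (∫⁻ ω, ENNReal.ofReal (Real.exp (u ω)) ∂S) ≤ relEnt P S := by
  rw [relEnt]
  by_cases hcond : P ≪ S ∧ Integrable (llr P S) P
  swap
  · rw [if_neg hcond]; exact le_top
  rw [if_pos hcond]
  obtain ⟨hPS, hint⟩ := hcond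
  have hllr : ∫⁻ ω, ENNReal.ofReal (llr P S ω) ∂P ≠ ⊤ := lintegral_ofReal_le_of_integrable hint
  have hpos : ∫⁻ ω, ENNReal.ofReal (u ω) ∂P ≠ ⊤ :=
    lintegral_ofReal_pos_ne_top hPS hu hexp hllr
  have huP : Integrable u P := integrable_of_lintegral_parts hu hpos hneg
  have hexpInt : Integrable (fun ω => Real.exp (u ω)) S := by
    refine ⟨hu.exp.aestronglyMeasurable, ?_⟩
    rw [hasFiniteIntegral_iff_ofReal (Filter.Eventually.of_forall fun ω => (Real.exp_pos _).le)]
    exact hexp.lt_top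
  set E := ∫⁻ ω, ENNReal.ofReal (Real.exp (u ω)) ∂S with hE
  have hE0 : 0 < E := lintegral_ofReal_exp_pos S (IsProbabilityMeasure.ne_zero S) hu
  have hEtR : 0 < E.toReal := ENNReal.toReal_pos hE0.ne' hexp
  have hlogE : ENNReal.log E = ((Real.log E.toReal : ℝ) : EReal) := by
    conv_lhs => rw [← ENNReal.ofReal_toReal hexp]
    rw [ENNReal.log_ofReal_of_pos hEtR]
  have hIntExp : ∫ ω, Real.exp (u ω) ∂S = E.toReal := by
    rw [integral_eq_lintegral_of_nonneg_ae
      (Filter.Eventually.of_forall fun ω => (Real.exp_pos _).le) hu.exp.aestronglyMeasurable]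
  have hIntU : ∫ ω, u ω ∂P =
      (∫⁻ ω, ENNReal.ofReal (u ω) ∂P).toReal - (∫⁻ ω, ENNReal.ofReal (-u ω) ∂P).toReal :=
    integral_eq_lintegral_pos_part_sub_lintegral_neg_part huP
  rw [ereal_coe_ennreal_eq hpos, ereal_coe_ennreal_eq hneg, hlogE,
    ← EReal.coe_sub, ← EReal.coe_sub, EReal.coe_le_coe_iff]
  have := dv_real_ineq hPS hint huP hexpInt
  rw [hIntExp, hIntU] at this
  linarith

lemma relEnt_le_sSup_dvSet {Ω : Type*} [MeasurableSpace Ω]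
    (P S : Measure Ω) [IsProbabilityMeasure P] [IsProbabilityMeasure S] (hPS : P ≪ S) :
    relEnt P S ≤ sSup (dvSet P S) := by
  -- the truncated log-likelihood ratios
  set f := P.rnDeriv S with hf
  have hfm : Measurable f := Measure.measurable_rnDeriv P S
  set u : ℕ → Ω → ℝ := fun n ω => if f ω = 0 then -(n:ℝ) else max (llr P S ω) (-(n:ℝ)) with hu
  have hum : ∀ n, Measurable (u n) := by
    intro n
    exact Measurable.ite (hfm (measurableSet_singleton 0)) measurable_const
      ((measurable_llr P S).max measurable_const)
  have hu_ae : ∀ n, (u n) =ᵐ[P] fun ω => max (llr P S ω) (-(n:ℝ)) := by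
    intro n
    filter_upwards [Measure.rnDeriv_pos hPS] with ω hω
    exact if_neg hω.ne'
  -- exp moment bound
  have hexp : ∀ n : ℕ, ∫⁻ ω, ENNReal.ofReal (Real.exp (u n ω)) ∂S
      ≤ ENNReal.ofReal (Real.exp (-(n:ℝ))) + 1 := by
    intro n
    have hptw : ∀ᵐ ω ∂S, ENNReal.ofReal (Real.exp (u n ω))
        ≤ ENNReal.ofReal (Real.exp (-(n:ℝ))) + f ω := by
      filter_upwards [Measure.rnDeriv_lt_top P S] with ω hω
      by_cases h0 : f ω = 0
      · simp only [hu, h0, if_pos rfl, if_true]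
        simp [if_pos h0]
      · have hftR : 0 < (f ω).toReal := ENNReal.toReal_pos h0 hω.ne
        have : Real.exp (u n ω) ≤ Real.exp (-(n:ℝ)) + (f ω).toReal := by
          simp only [hu, if_neg h0]
          rcases max_cases (llr P S ω) (-(n:ℝ)) with ⟨hm, _⟩ | ⟨hm, _⟩
          · rw [hm]
            have : llr P S ω = Real.log (f ω).toReal := rfl
            rw [this, Real.exp_log hftR]
            linarith [(Real.exp_pos (-(n:ℝ))).le]
          · rw [hm]
            linarith [ENNReal.toReal_nonneg (a := f ω)]
        calc ENNReal.ofReal (Real.exp (u n ω))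
            ≤ ENNReal.ofReal (Real.exp (-(n:ℝ)) + (f ω).toReal) := ENNReal.ofReal_le_ofReal this
          _ = ENNReal.ofReal (Real.exp (-(n:ℝ))) + ENNReal.ofReal ((f ω).toReal) :=
              ENNReal.ofReal_add (Real.exp_pos _).le ENNReal.toReal_nonneg
          _ = ENNReal.ofReal (Real.exp (-(n:ℝ))) + f ω := by
              rw [ENNReal.ofReal_toReal hω.ne]
    calc ∫⁻ ω, ENNReal.ofReal (Real.exp (u n ω)) ∂S
        ≤ ∫⁻ ω, (ENNReal.ofReal (Real.exp (-(n:ℝ))) + f ω) ∂S := lintegral_mono_ae hptw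
      _ = ENNReal.ofReal (Real.exp (-(n:ℝ))) + 1 := by
          rw [lintegral_add_left measurable_const, lintegral_const,
            Measure.lintegral_rnDeriv hPS]
          simp
  have hexp_ne : ∀ n : ℕ, ∫⁻ ω, ENNReal.ofReal (Real.exp (u n ω)) ∂S ≠ ⊤ :=
    fun n => ((hexp n).trans_lt (by simp [ENNReal.add_lt_top, ENNReal.ofReal_lt_top])).ne
  have hneg_ne : ∀ n : ℕ, ∫⁻ ω, ENNReal.ofReal (-(u n ω)) ∂P ≠ ⊤ := by
    intro n
    have hb : ∀ ω, ENNReal.ofReal (-(u n ω)) ≤ ENNReal.ofReal (n:ℝ) := by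
      intro ω
      apply ENNReal.ofReal_le_ofReal
      simp only [hu]
      split
      · simp
      · simp only [neg_le]
        exact le_max_right _ _
    refine ((lintegral_mono hb).trans_lt ?_).ne
    rw [lintegral_const]
    simp [ENNReal.ofReal_lt_top]
  -- membership
  have hmem : ∀ n : ℕ,
      (((∫⁻ ω, ENNReal.ofReal (u n ω) ∂P : ℝ≥0∞) : EReal)
        - ((∫⁻ ω, ENNReal.ofReal (-(u n ω)) ∂P : ℝ≥0∞) : EReal)
        - ENNReal.log (∫⁻ ω, ENNReal.ofReal (Real.exp (u n ω)) ∂S)) ∈ dvSet P S := by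
    intro n
    exact ⟨u n, hum n, hexp_ne n, hneg_ne n, rfl⟩
  by_cases hint : Integrable (llr P S) P
  · -- finite entropy case
    rw [relEnt, if_pos ⟨hPS, hint⟩]
    set H := ∫ ω, llr P S ω ∂P with hH
    have hInt_n : ∀ n : ℕ, Integrable (u n) P := by
      intro n
      refine Integrable.mono' (hint.abs.add (integrable_const (n:ℝ)))
        (hum n).aestronglyMeasurable ?_
      filter_upwards [hu_ae n] with ω hω
      rw [Real.norm_eq_abs, hω, abs_le]
      simp only [Pi.add_apply]
      have hn : (0:ℝ) ≤ (n:ℝ) := Nat.cast_nonneg n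
      have ha1 := le_abs_self (llr P S ω)
      have ha2 := abs_nonneg (llr P S ω)
      constructor
      · have : -(|llr P S ω| + (n:ℝ)) ≤ -(n:ℝ) := by linarith
        exact this.trans (le_max_right _ _)
      · exact max_le (by linarith) (by linarith)
    have hxval : ∀ n : ℕ,
        (((∫⁻ ω, ENNReal.ofReal (u n ω) ∂P : ℝ≥0∞) : EReal)
          - ((∫⁻ ω, ENNReal.ofReal (-(u n ω)) ∂P : ℝ≥0∞) : EReal))
        = ((∫ ω, u n ω ∂P : ℝ) : EReal) := by
      intro n
      rw [ereal_coe_ennreal_eq (lintegral_ofReal_le_of_integrable (hInt_n n)),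
        ereal_coe_ennreal_eq (hneg_ne n), ← EReal.coe_sub,
        ← integral_eq_lintegral_pos_part_sub_lintegral_neg_part (hInt_n n)]
    have hlog_le : ∀ n : ℕ, ENNReal.log (∫⁻ ω, ENNReal.ofReal (Real.exp (u n ω)) ∂S)
        ≤ ((Real.log (Real.exp (-(n:ℝ)) + 1) : ℝ) : EReal) := by
      intro n
      calc ENNReal.log (∫⁻ ω, ENNReal.ofReal (Real.exp (u n ω)) ∂S)
          ≤ ENNReal.log (ENNReal.ofReal (Real.exp (-(n:ℝ))) + 1) :=
            ENNReal.log_monotone (hexp n)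
        _ = ((Real.log (Real.exp (-(n:ℝ)) + 1) : ℝ) : EReal) := by
            rw [show (ENNReal.ofReal (Real.exp (-(n:ℝ))) + 1 : ℝ≥0∞)
                = ENNReal.ofReal (Real.exp (-(n:ℝ)) + 1) by
                rw [ENNReal.ofReal_add (Real.exp_pos _).le zero_le_one, ENNReal.ofReal_one],
              ENNReal.log_ofReal_of_pos (by positivity)]
    have hH_le : ∀ n : ℕ, H ≤ ∫ ω, u n ω ∂P := by
      intro n
      refine integral_mono_ae hint (hInt_n n) ?_
      filter_upwards [hu_ae n] with ω hω
      rw [hω]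
      exact le_max_left _ _
    have hgoal_n : ∀ n : ℕ,
        ((H - Real.log (Real.exp (-(n:ℝ)) + 1) : ℝ) : EReal) ≤ sSup (dvSet P S) := by
      intro n
      refine le_trans ?_ (le_sSup (hmem n))
      rw [sub_eq_add_neg _ (ENNReal.log _), hxval n, ← sub_eq_add_neg, EReal.coe_sub]
      exact EReal.sub_le_sub (EReal.coe_le_coe_iff.mpr (hH_le n)) (hlog_le n)
    have htend : Tendsto (fun n : ℕ => ((H - Real.log (Real.exp (-(n:ℝ)) + 1) : ℝ) : EReal))
        atTop (𝓝 ((H : ℝ) : EReal)) := by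
      apply EReal.tendsto_coe.mpr
      have h1 : Tendsto (fun n : ℕ => Real.exp (-(n:ℝ))) atTop (𝓝 0) :=
        Real.tendsto_exp_atBot.comp
          (Filter.tendsto_neg_atBot_iff.mpr tendsto_natCast_atTop_atTop)
      have h2 : Tendsto (fun x : ℝ => H - Real.log (x + 1)) (𝓝 0) (𝓝 H) := by
        have hc : ContinuousAt (fun x : ℝ => H - Real.log (x + 1)) 0 :=
          continuousAt_const.sub ((Real.continuousAt_log (by norm_num)).comp
            (continuousAt_id.add continuousAt_const))
        have := hc.tendsto
        simpa using this
      exact h2.comp h1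
    exact le_of_tendsto htend (Filter.Eventually.of_forall hgoal_n)
  · -- infinite entropy case
    rw [relEnt, if_neg (fun h => hint h.2)]
    have h0 : ∫⁻ ω, ENNReal.ofReal (u 0 ω) ∂P = ⊤ := by
      have hcong : ∫⁻ ω, ENNReal.ofReal (u 0 ω) ∂P
          = ∫⁻ ω, ENNReal.ofReal (llr P S ω) ∂P := by
        apply lintegral_congr_ae
        filter_upwards [hu_ae 0] with ω hω
        rw [hω]
        simp only [Nat.cast_zero, neg_zero]
        exact ofReal_max_zero' _
      by_contra hfin
      exact hint (integrable_of_lintegral_parts (measurable_llr P S) (hcong ▸ hfin)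
        (lintegral_ofReal_neg_llr_ne_top P S hPS))
    refine le_sSup (s := dvSet P S) (a := ⊤) ?_ |>.trans_eq' rfl
    refine ⟨u 0, hum 0, hexp_ne 0, hneg_ne 0, ?_⟩
    rw [h0, EReal.coe_ennreal_top]
    exact (ereal_top_sub_sub (fun h => (hneg_ne 0) (EReal.coe_ennreal_eq_top_iff.mp h))
      (fun h => (hexp_ne 0) (ENNReal.log_eq_top_iff.mp h))).symm

section tiltedfacts
variable {Ω : Type*} [MeasurableSpace Ω] {R : Measure Ω} {W : Ω → ℝ}

lemma zW_ne_zero (hWm : Measurable W) (hR : R ≠ 0) : zW R W ≠ 0 := by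
  intro h
  rw [zW, lintegral_eq_zero_iff (by fun_prop : Measurable fun ω => ENNReal.ofReal (Real.exp (-W ω)))] at h
  have : ∀ᵐ ω ∂ R, False := by
    filter_upwards [h] with ω hω
    rw [Pi.zero_apply] at hω
    exact (Real.exp_pos _).not_ge (ENNReal.ofReal_eq_zero.mp hω)
  rw [ae_iff] at this
  simp only [not_false_eq_true, Set.setOf_true] at this
  exact hR (Measure.measure_univ_eq_zero.mp this)

lemma tiltedPM_isProb (hWm : Measurable W) (hR : R ≠ 0) (hzW : zW R W ≠ ⊤) :
    IsProbabilityMeasure (tiltedPM R W) := by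
  constructor
  rw [tiltedPM, Measure.smul_apply, smul_eq_mul, withDensity_apply _ MeasurableSet.univ,
    setLIntegral_univ]
  exact ENNReal.inv_mul_cancel (zW_ne_zero hWm hR) hzW

lemma absolutelyContinuous_tiltedPM (hWm : Measurable W) (hzW : zW R W ≠ ⊤) :
    R ≪ tiltedPM R W := by
  refine Measure.AbsolutelyContinuous.trans ?_
    (Measure.absolutelyContinuous_smul (ENNReal.inv_ne_zero.mpr hzW))
  exact withDensity_absolutelyContinuous' hWm.neg.exp.ennreal_ofReal.aemeasurable
    (Filter.Eventually.of_forall fun ω => by simp [ENNReal.ofReal_eq_zero, not_le, Real.exp_pos])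

lemma lintegral_exp_tiltedPM (hWm : Measurable W) {v : Ω → ℝ} (hv : Measurable v) :
    ∫⁻ ω, ENNReal.ofReal (Real.exp (v ω)) ∂(tiltedPM R W)
      = (zW R W)⁻¹ * ∫⁻ ω, ENNReal.ofReal (Real.exp (v ω - W ω)) ∂ R := by
  rw [tiltedPM, lintegral_smul_measure,
    lintegral_withDensity_eq_lintegral_mul _ (by fun_prop : Measurable fun ω => ENNReal.ofReal (Real.exp (-W ω))) hv.exp.ennreal_ofReal]
  congr 1
  apply lintegral_congr
  intro ω
  simp only [Pi.mul_apply]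
  rw [← ENNReal.ofReal_mul (Real.exp_pos _).le, ← Real.exp_add]
  ring_nf

lemma lintegral_exp_tiltedPM_shift (hWm : Measurable W) (hzW : zW R W ≠ ⊤) (hR : R ≠ 0)
    {u : Ω → ℝ} (hu : Measurable u) :
    ∫⁻ ω, ENNReal.ofReal (Real.exp (u ω + W ω + Real.log (zW R W).toReal)) ∂(tiltedPM R W)
      = ∫⁻ ω, ENNReal.ofReal (Real.exp (u ω)) ∂ R := by
  have hz0 := zW_ne_zero hWm hR
  have hzt : 0 < (zW R W).toReal := ENNReal.toReal_pos hz0 hzW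
  rw [lintegral_exp_tiltedPM hWm (by fun_prop)]
  have : ∀ ω, u ω + W ω + Real.log (zW R W).toReal - W ω
      = u ω + Real.log (zW R W).toReal := fun ω => by ring
  have h2 : ∀ ω, ENNReal.ofReal (Real.exp (u ω) * Real.exp (Real.log (zW R W).toReal))
      = ENNReal.ofReal (Real.exp (u ω)) * ENNReal.ofReal (Real.exp (Real.log (zW R W).toReal)) :=
    fun ω => ENNReal.ofReal_mul (Real.exp_pos _).le
  simp_rw [this, Real.exp_add, h2]
  rw [lintegral_mul_const _ hu.exp.ennreal_ofReal, Real.exp_log hzt,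
    ENNReal.ofReal_toReal hzW, mul_comm (∫⁻ ω, ENNReal.ofReal (Real.exp (u ω)) ∂ R) (zW R W),
    ← mul_assoc, ENNReal.inv_mul_cancel hz0 hzW, one_mul]

end tiltedfacts

lemma sSup_image_add_ereal (s : Set EReal) (c : ℝ) :
    sSup ((fun x => x + (c : EReal)) '' s) = sSup s + (c : EReal) := by
  apply le_antisymm
  · refine sSup_le ?_
    rintro y ⟨x, hx, rfl⟩
    exact add_le_add_left (le_sSup hx) _
  · have h1 : sSup s ≤ sSup ((fun x => x + (c : EReal)) '' s) - (c : EReal) := by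
      refine sSup_le fun x hx => ?_
      exact (EReal.le_sub_iff_add_le (Or.inl (EReal.coe_ne_bot c))
        (Or.inl (EReal.coe_ne_top c))).mpr (le_sSup ⟨x, hx, rfl⟩)
    calc sSup s + (c : EReal)
        ≤ (sSup ((fun x => x + (c : EReal)) '' s) - (c : EReal)) + (c : EReal) :=
          add_le_add_left h1 _
      _ = _ := EReal.sub_add_cancel

lemma ereal_add_sub_comm (A : EReal) (c L : ℝ) :
    (A + (c : EReal)) - (L : EReal) = (A - (L : EReal)) + (c : EReal) := by
  induction A with
  | bot => simp [EReal.bot_add, EReal.bot_sub]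
  | coe a => norm_cast; ring
  | top =>
    rw [EReal.top_add_of_ne_bot (EReal.coe_ne_bot c), ereal_top_sub (EReal.coe_ne_top L),
      EReal.top_add_of_ne_bot (EReal.coe_ne_bot c)]

lemma ereal_parts_shift {Ω : Type*} [MeasurableSpace Ω] {P : Measure Ω}
    [IsProbabilityMeasure P] {u w : Ω → ℝ} (hu : Measurable u) (hwm : Measurable w)
    (hw : Integrable w P) (hneg_u : ∫⁻ ω, ENNReal.ofReal (-u ω) ∂P ≠ ⊤) :
    (∫⁻ ω, ENNReal.ofReal (-(u ω + w ω)) ∂P ≠ ⊤) ∧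
    ((∫⁻ ω, ENNReal.ofReal (u ω + w ω) ∂P : ℝ≥0∞) : EReal)
        - ((∫⁻ ω, ENNReal.ofReal (-(u ω + w ω)) ∂P : ℝ≥0∞) : EReal)
      = (((∫⁻ ω, ENNReal.ofReal (u ω) ∂P : ℝ≥0∞) : EReal)
          - ((∫⁻ ω, ENNReal.ofReal (-u ω) ∂P : ℝ≥0∞) : EReal)) + ((∫ ω, w ω ∂P : ℝ) : EReal) := by
  have hnegw : ∫⁻ ω, ENNReal.ofReal (-(w ω)) ∂P ≠ ⊤ :=
    lintegral_ofReal_le_of_integrable hw.neg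
  have hnegv : ∫⁻ ω, ENNReal.ofReal (-(u ω + w ω)) ∂P ≠ ⊤ := by
    have hb : ∀ ω, ENNReal.ofReal (-(u ω + w ω))
        ≤ ENNReal.ofReal (-u ω) + ENNReal.ofReal (-(w ω)) := by
      intro ω
      rw [show -(u ω + w ω) = (-u ω) + (-(w ω)) by ring]
      exact ENNReal.ofReal_add_le
    refine ((lintegral_mono hb).trans_lt ?_).ne
    rw [lintegral_add_left (by fun_prop : Measurable fun ω => ENNReal.ofReal (-u ω))]
    exact ENNReal.add_lt_top.mpr ⟨hneg_u.lt_top, hnegw.lt_top⟩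
  refine ⟨hnegv, ?_⟩
  by_cases hpos_u : ∫⁻ ω, ENNReal.ofReal (u ω) ∂P = ⊤
  · have hposv : ∫⁻ ω, ENNReal.ofReal (u ω + w ω) ∂P = ⊤ := by
      by_contra hfin
      have hb : ∀ ω, ENNReal.ofReal (u ω)
          ≤ ENNReal.ofReal (u ω + w ω) + ENNReal.ofReal (-(w ω)) := by
        intro ω
        have he : ENNReal.ofReal (u ω) = ENNReal.ofReal ((u ω + w ω) + (-(w ω))) := by
          norm_num
        rw [he]
        exact ENNReal.ofReal_add_le
      have : ∫⁻ ω, ENNReal.ofReal (u ω) ∂P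
          ≤ ∫⁻ ω, ENNReal.ofReal (u ω + w ω) ∂P + ∫⁻ ω, ENNReal.ofReal (-(w ω)) ∂P := by
        refine (lintegral_mono hb).trans_eq ?_
        exact lintegral_add_left (hu.add hwm).ennreal_ofReal _
      rw [hpos_u] at this
      exact absurd (top_le_iff.mp this)
        (ENNReal.add_lt_top.mpr ⟨lt_top_iff_ne_top.mpr hfin, hnegw.lt_top⟩).ne
    rw [hpos_u, hposv, EReal.coe_ennreal_top,
      ereal_top_sub (fun h => hnegv (EReal.coe_ennreal_eq_top_iff.mp h)),
      ereal_top_sub (fun h => hneg_u (EReal.coe_ennreal_eq_top_iff.mp h)),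
      EReal.top_add_of_ne_bot (EReal.coe_ne_bot _)]
  · have huP : Integrable u P := integrable_of_lintegral_parts hu hpos_u hneg_u
    have hvP : Integrable (fun ω => u ω + w ω) P := huP.add hw
    have hposv : ∫⁻ ω, ENNReal.ofReal (u ω + w ω) ∂P ≠ ⊤ :=
      lintegral_ofReal_le_of_integrable hvP
    rw [ereal_coe_ennreal_eq hposv, ereal_coe_ennreal_eq hnegv, ereal_coe_ennreal_eq hpos_u,
      ereal_coe_ennreal_eq hneg_u, ← EReal.coe_sub, ← EReal.coe_sub, ← EReal.coe_add,
      EReal.coe_eq_coe_iff]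
    have h1 := integral_eq_lintegral_pos_part_sub_lintegral_neg_part hvP
    have h2 := integral_eq_lintegral_pos_part_sub_lintegral_neg_part huP
    have h3 := integral_add huP hw
    rw [← h1, ← h2, h3]

lemma relEnt_eq_sSup_dvSet {Ω : Type*} [MeasurableSpace Ω]
    (P S : Measure Ω) [IsProbabilityMeasure P] [IsProbabilityMeasure S] (hPS : P ≪ S) :
    relEnt P S = sSup (dvSet P S) := by
  refine le_antisymm (relEnt_le_sSup_dvSet P S hPS) (sSup_le ?_)
  rintro x ⟨u, hu, hexp, hneg, rfl⟩
  exact dv_element_le_relEnt hu hexp hneg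

lemma ereal_add_sub_sub (x : EReal) (a b : ℝ) :
    (x + ((a + b : ℝ) : EReal)) - (a : EReal) - (b : EReal) = x := by
  induction x with
  | bot => simp [EReal.bot_add, EReal.bot_sub]
  | coe r => norm_cast; ring
  | top =>
    rw [EReal.top_add_of_ne_bot (EReal.coe_ne_bot _), ereal_top_sub (EReal.coe_ne_top a),
      ereal_top_sub (EReal.coe_ne_top b)]

/-- Variational representation of `H(P|R)` for `P ≪ R` over the class of measurable `u`
with `∫ e^u dR < ∞` and `∫ u₋ dP < ∞` (where `∫ u dP ∈ (-∞,∞]` is then well defined as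
`∫ u₊ dP - ∫ u₋ dP`): `H(P|R) = sup { ∫ u dP - log ∫ e^u dR }`. -/
theorem relEntSF_eq_sSup_of_absolutelyContinuous
    {Ω : Type*} [MeasurableSpace Ω] (R : Measure Ω) [SigmaFinite R]
    (P : Measure Ω) [IsProbabilityMeasure P] (hPR : P ≪ R)
    (W : Ω → ℝ) (hWm : Measurable W) (hW0 : ∀ ω, 0 ≤ W ω)
    (hzW : zW R W ≠ ⊤) (hWP : Integrable W P) :
    relEntSF R W P =
      sSup { x : EReal | ∃ u : Ω → ℝ, Measurable u ∧
        (∫⁻ ω, ENNReal.ofReal (Real.exp (u ω)) ∂ R) ≠ ⊤ ∧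
        (∫⁻ ω, ENNReal.ofReal (-u ω) ∂P) ≠ ⊤ ∧
        x = ((∫⁻ ω, ENNReal.ofReal (u ω) ∂P : ENNReal) : EReal)
              - ((∫⁻ ω, ENNReal.ofReal (-u ω) ∂P : ENNReal) : EReal)
              - ENNReal.log (∫⁻ ω, ENNReal.ofReal (Real.exp (u ω)) ∂ R) } := by
  have hR0 : R ≠ 0 := by
    intro h
    have h1 : P Set.univ = 0 := hPR (by simp [h])
    rw [measure_univ] at h1
    exact one_ne_zero h1
  have hz0 : zW R W ≠ 0 := zW_ne_zero hWm hR0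
  haveI hSprob : IsProbabilityMeasure (tiltedPM R W) := tiltedPM_isProb hWm hR0 hzW
  have hPS : P ≪ tiltedPM R W := hPR.trans (absolutelyContinuous_tiltedPM hWm hzW)
  set c₀ := Real.log (zW R W).toReal with hc₀
  set w : Ω → ℝ := fun ω => W ω + c₀ with hw
  have hwm : Measurable w := hWm.add_const _
  have hwInt : Integrable w P := hWP.add (integrable_const c₀)
  have hIw : ∫ ω, w ω ∂P = (∫ ω, W ω ∂P) + c₀ := by
    rw [hw, integral_add hWP (integrable_const _), integral_const]
    simp
  set setR := { x : EReal | ∃ u : Ω → ℝ, Measurable u ∧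
        (∫⁻ ω, ENNReal.ofReal (Real.exp (u ω)) ∂ R) ≠ ⊤ ∧
        (∫⁻ ω, ENNReal.ofReal (-u ω) ∂P) ≠ ⊤ ∧
        x = ((∫⁻ ω, ENNReal.ofReal (u ω) ∂P : ENNReal) : EReal)
              - ((∫⁻ ω, ENNReal.ofReal (-u ω) ∂P : ENNReal) : EReal)
              - ENNReal.log (∫⁻ ω, ENNReal.ofReal (Real.exp (u ω)) ∂ R) } with hsetR
  -- key facts about the shift u ↦ u + w
  have keyE : ∀ u : Ω → ℝ, Measurable u →
      ∫⁻ ω, ENNReal.ofReal (Real.exp (u ω + w ω)) ∂(tiltedPM R W)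
        = ∫⁻ ω, ENNReal.ofReal (Real.exp (u ω)) ∂ R := by
    intro u hu
    rw [← lintegral_exp_tiltedPM_shift hWm hzW hR0 hu]
    apply lintegral_congr
    intro ω
    rw [hw]
    ring_nf
    rw [hc₀]
  have keyElem : ∀ u : Ω → ℝ, Measurable u →
      (∫⁻ ω, ENNReal.ofReal (-u ω) ∂P) ≠ ⊤ →
      (∫⁻ ω, ENNReal.ofReal (Real.exp (u ω)) ∂ R) ≠ ⊤ →
      ((∫⁻ ω, ENNReal.ofReal (u ω + w ω) ∂P : ℝ≥0∞) : EReal)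
          - ((∫⁻ ω, ENNReal.ofReal (-(u ω + w ω)) ∂P : ℝ≥0∞) : EReal)
          - ENNReal.log (∫⁻ ω, ENNReal.ofReal (Real.exp (u ω + w ω)) ∂(tiltedPM R W))
        = (((∫⁻ ω, ENNReal.ofReal (u ω) ∂P : ℝ≥0∞) : EReal)
            - ((∫⁻ ω, ENNReal.ofReal (-u ω) ∂P : ℝ≥0∞) : EReal)
            - ENNReal.log (∫⁻ ω, ENNReal.ofReal (Real.exp (u ω)) ∂ R))
          + (((∫ ω, W ω ∂P) + c₀ : ℝ) : EReal) := by
    intro u hu hneg hexpR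
    have hshift := ereal_parts_shift (P := P) hu hwm hwInt hneg
    rw [keyE u hu, hshift.2]
    have hE0 : 0 < ∫⁻ ω, ENNReal.ofReal (Real.exp (u ω)) ∂ R :=
      lintegral_ofReal_exp_pos R hR0 hu
    have hlog : ENNReal.log (∫⁻ ω, ENNReal.ofReal (Real.exp (u ω)) ∂ R)
        = ((Real.log (∫⁻ ω, ENNReal.ofReal (Real.exp (u ω)) ∂ R).toReal : ℝ) : EReal) := by
      conv_lhs => rw [← ENNReal.ofReal_toReal hexpR]
      rw [ENNReal.log_ofReal_of_pos (ENNReal.toReal_pos hE0.ne' hexpR)]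
    rw [hlog, hIw]
    exact ereal_add_sub_comm _ _ _
  -- the set identity
  have hsets : dvSet P (tiltedPM R W)
      = (fun x => x + (((∫ ω, W ω ∂P) + c₀ : ℝ) : EReal)) '' setR := by
    ext x
    constructor
    · rintro ⟨v, hv, hvexp, hvneg, rfl⟩
      set u : Ω → ℝ := fun ω => v ω - w ω with hu_def
      have hu : Measurable u := hv.sub hwm
      have hv_eq : ∀ ω, v ω = u ω + w ω := fun ω => by rw [hu_def]; ring
      have hrw1 : ∫⁻ ω, ENNReal.ofReal (v ω) ∂P = ∫⁻ ω, ENNReal.ofReal (u ω + w ω) ∂P :=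
        lintegral_congr fun ω => by rw [hv_eq ω]
      have hrw2 : ∫⁻ ω, ENNReal.ofReal (-v ω) ∂P = ∫⁻ ω, ENNReal.ofReal (-(u ω + w ω)) ∂P :=
        lintegral_congr fun ω => by rw [hv_eq ω]
      have hrw3 : ∫⁻ ω, ENNReal.ofReal (Real.exp (v ω)) ∂(tiltedPM R W)
          = ∫⁻ ω, ENNReal.ofReal (Real.exp (u ω + w ω)) ∂(tiltedPM R W) :=
        lintegral_congr fun ω => by rw [hv_eq ω]
      have hneg_u : ∫⁻ ω, ENNReal.ofReal (-u ω) ∂P ≠ ⊤ := by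
        have hb : ∀ ω, ENNReal.ofReal (-u ω)
            ≤ ENNReal.ofReal (-v ω) + ENNReal.ofReal (w ω) := by
          intro ω
          have he : -u ω = -v ω + w ω := by simp only [hu_def]; ring
          rw [he]
          exact ENNReal.ofReal_add_le
        refine ((lintegral_mono hb).trans_lt ?_).ne
        rw [lintegral_add_left (by fun_prop : Measurable fun ω => ENNReal.ofReal (-v ω))]
        exact ENNReal.add_lt_top.mpr
          ⟨hvneg.lt_top, (lintegral_ofReal_le_of_integrable hwInt).lt_top⟩
      have hexpR : ∫⁻ ω, ENNReal.ofReal (Real.exp (u ω)) ∂ R ≠ ⊤ := by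
        rw [← keyE u hu, ← hrw3]
        exact hvexp
      refine ⟨_, ⟨u, hu, hexpR, hneg_u, rfl⟩, ?_⟩
      beta_reduce
      rw [← keyElem u hu hneg_u hexpR, hrw1, hrw2, hrw3]
    · rintro ⟨x', ⟨u, hu, hexpR, hneg_u, rfl⟩, rfl⟩
      refine ⟨fun ω => u ω + w ω, hu.add hwm, ?_, ?_, ?_⟩
      · rw [keyE u hu]; exact hexpR
      · exact (ereal_parts_shift (P := P) hu hwm hwInt hneg_u).1
      · exact (keyElem u hu hneg_u hexpR).symm
  rw [relEntSF, relEnt_eq_sSup_dvSet P (tiltedPM R W) hPS, hsets, sSup_image_add_ereal]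
  exact ereal_add_sub_sub _ _ _
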